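/- arXiv:2409.17828 — 2 statements merged into one kernel-verified Lean document; each statement's English description precedes it below -/
import Mathlib

section
/- Let G be a group equipped with a norm ν : G → ℝ≥0 that is conjugation-invariant, symmetric (ν(g) = ν(g⁻¹)), subadditive (ν(gh) ≤ ν(g) + ν(h)), and vanishes at the identity. Let r : G → ℝ be a homogeneous quasimorphism with defect D that is Lipschitz with respect to ν with constant 1 (i.e. |r(g)| ≤ ν(g) for all g). Let S ≤ G be a subgroup on which r vanishes, and suppose there exists φ ∈ G with r(φ) ≠ 0. Define d(φS, ψS) = inf{ν(η) : η ∈ G, ηφS = ψS} on cosets of S. Then for every n ≥ 1: inf{ν(ψ) : ψ ∈ φⁿS} ≥ n·|r(φ)| − D. In particular the set of cosets {φⁿS : n ∈ ℕ} has infinite diameter for d. -/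
theorem khanevsky_argument {G : Type*} [Group G] (ν : G → ℝ) (r : G → ℝ) (D : ℝ)
    (hν_nonneg : ∀ g : G, 0 ≤ ν g)
    (hν_conj : ∀ g h : G, ν (h * g * h⁻¹) = ν g)
    (hν_symm : ∀ g : G, ν g⁻¹ = ν g)
    (hν_sub : ∀ g h : G, ν (g * h) ≤ ν g + ν h)
    (hν_one : ν 1 = 0)
    (hr_defect : ∀ g h : G, |r (g * h) - r g - r h| ≤ D)
    (hr_hom : ∀ (g : G) (n : ℤ), r (g ^ n) = n * r g)
    (hr_lip : ∀ g : G, |r g| ≤ ν g)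
    (S : Subgroup G)
    (hrS : ∀ s ∈ S, r s = 0)
    (φ : G) (hφ : r φ ≠ 0) :
    ∀ n : ℕ, 1 ≤ n → ∀ ψ : G, (∃ s ∈ S, ψ = φ ^ n * s) → (n : ℝ) * |r φ| - D ≤ ν ψ := by
  intro n hn ψ ⟨s, hs, hψ⟩
  have h1 : |r (φ ^ n * s) - r (φ ^ n) - r s| ≤ D := hr_defect _ _
  have h2 : r (φ ^ n) = (n : ℝ) * r φ := by
    have := hr_hom φ (n : ℤ); rw [zpow_natCast] at this; simpa using this
  rw [hrS s hs, h2, sub_zero] at h1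
  have h3 : (n : ℝ) * |r φ| = |r (φ ^ n * s) - (r (φ ^ n * s) - (n : ℝ) * r φ)| := by
    rw [sub_sub_cancel, abs_mul, Nat.abs_cast]
  have h5 : |r (φ ^ n * s) - (r (φ ^ n * s) - (n : ℝ) * r φ)| ≤
      |r (φ ^ n * s)| + |r (φ ^ n * s) - (n : ℝ) * r φ| := abs_sub _ _
  have h4 := hr_lip (φ ^ n * s)
  rw [hψ]
  linarith
end

section
/- Let G be a group with a subadditive symmetric norm ν, S ≤ G a subgroup, and suppose there exists a homogeneous quasimorphism r : G → ℝ with |r(g)| ≤ ν(g) for all g, r|_S = 0, and r not identically zero. Then the function n ↦ inf{ν(ψ) : ψ ∈ φⁿS} (for φ with r(φ) ≠ 0) is unbounded; in particular sup over cosets gS of inf{ν(ψ) : ψ ∈ gS} is infinite. -/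
theorem infinite_hofer_diameter {G : Type*} [Group G] (ν : G → ℝ) (r : G → ℝ) (D : ℝ)
    (hν_sub : ∀ g h : G, ν (g * h) ≤ ν g + ν h)
    (hν_symm : ∀ g : G, ν g⁻¹ = ν g)
    (hr_defect : ∀ g h : G, |r (g * h) - r g - r h| ≤ D)
    (hr_hom : ∀ (g : G) (n : ℤ), r (g ^ n) = n * r g)
    (hr_lip : ∀ g : G, |r g| ≤ ν g)
    (S : Subgroup G) (hrS : ∀ s ∈ S, r s = 0)
    (φ : G) (hφ : r φ ≠ 0) :
    ∀ C : ℝ, ∃ n : ℕ, ∀ ψ : G, (∃ s ∈ S, ψ = φ ^ n * s) → C ≤ ν ψ := by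
  intro C
  have hrpos : 0 < |r φ| := abs_pos.mpr hφ
  obtain ⟨n, hn⟩ := exists_nat_ge ((C + D) / |r φ|)
  refine ⟨n, ?_⟩
  rintro ψ ⟨s, hs, rfl⟩
  have h1 : |r (φ ^ n * s) - r (φ ^ n) - r s| ≤ D := hr_defect _ _
  have h2 : r (φ ^ n) = n * r φ := by
    have := hr_hom φ n
    simpa using this
  rw [hrS s hs, h2, sub_zero] at h1
  have h3 : (n : ℝ) * |r φ| - D ≤ |r (φ ^ n * s)| := by
    have := abs_sub_abs_le_abs_sub (n * r φ) (r (φ ^ n * s))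
    rw [abs_mul, Nat.abs_cast] at this
    have h4 : |↑n * r φ - r (φ ^ n * s)| ≤ D := by rwa [abs_sub_comm]
    linarith
  have hC : C + D ≤ (n : ℝ) * |r φ| := by
    rw [div_le_iff₀ hrpos] at hn
    linarith
  have := hr_lip (φ ^ n * s)
  linarith
end
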